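/- The lifted Levi-Civita map L : (ℂ\{0}) × ℂ → (ℂ\{0}) × ℂ, L(z,w) = (z²/2, w/z̄), is a symplectic two-to-one covering: at every point (z,w) with z ≠ 0, the (real) derivative DL(z,w) : ℝ⁴ → ℝ⁴ preserves the standard symplectic bilinear form ω₀((a,b),(a',b')) := ⟨b, a'⟩ - ⟨b', a⟩ on ℝ² × ℝ² ≅ ℂ × ℂ; moreover every point of (ℂ\{0}) × ℂ has exactly two preimages under L. -/

import Mathlib

/-- The lifted Levi-Civita map `L(z,w) = (z²/2, w/z̄)` on `(ℂ \ {0}) × ℂ`. -/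
noncomputable def leviCivita (zw : ℂ × ℂ) : ℂ × ℂ :=
  (zw.1 ^ 2 / 2, zw.2 / (starRingEnd ℂ zw.1))

/-- The Euclidean inner product on `ℝ² ≅ ℂ`. -/
def eip (a b : ℂ) : ℝ := a.re * b.re + a.im * b.im

/-- The standard symplectic bilinear form `ω₀((a,b),(a',b')) = ⟨b,a'⟩ - ⟨b',a⟩`
on `ℝ² × ℝ² ≅ ℂ × ℂ`. -/
def omega0 (v v' : ℂ × ℂ) : ℝ := eip v.2 v'.1 - eip v'.2 v.1

lemma eip_eq (a b : ℂ) : eip a b = ((starRingEnd ℂ) a * b).re := by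
  simp [eip, Complex.mul_re]

lemma lc_fderiv (z w : ℂ) (hz : z ≠ 0) (v : ℂ × ℂ) :
    fderiv ℝ leviCivita (z, w) v =
      (z * v.1,
        v.2 / (starRingEnd ℂ z) - w * (starRingEnd ℂ v.1) / (starRingEnd ℂ z) ^ 2) := by
  have hz' : (starRingEnd ℂ) z ≠ 0 := by simpa using hz
  have h1 : HasFDerivAt (fun p : ℂ × ℂ => p.1 ^ 2 / 2)
      (((((1 : ℂ →L[ℂ] ℂ).smulRight ((2 : ℕ) * z ^ 1 / 2)).restrictScalars ℝ)).comp
        (ContinuousLinearMap.fst ℝ ℂ ℂ)) (z, w) :=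
    by have := (((hasDerivAt_pow 2 z).div_const 2).hasFDerivAt.restrictScalars ℝ).comp (z, w)
                 (hasFDerivAt_fst (𝕜 := ℝ) (E := ℂ) (F := ℂ)); exact this
  have hconj : HasFDerivAt (fun p : ℂ × ℂ => (starRingEnd ℂ) p.1)
      ((Complex.conjCLE.toContinuousLinearMap).comp (ContinuousLinearMap.fst ℝ ℂ ℂ)) (z, w) :=
    (Complex.conjCLE.toContinuousLinearMap.hasFDerivAt).comp (z, w) hasFDerivAt_fst
  have hinv : HasFDerivAt (fun p : ℂ × ℂ => ((starRingEnd ℂ) p.1)⁻¹)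
      ((((1 : ℂ →L[ℂ] ℂ).smulRight (-(((starRingEnd ℂ) z) ^ 2)⁻¹)).restrictScalars ℝ).comp
        ((Complex.conjCLE.toContinuousLinearMap).comp (ContinuousLinearMap.fst ℝ ℂ ℂ))) (z, w) :=
    HasFDerivAt.comp (z, w) ((hasDerivAt_inv hz').hasFDerivAt.restrictScalars ℝ) hconj
  have hg := (hasFDerivAt_snd (𝕜 := ℝ) (E := ℂ) (F := ℂ)).mul hinv
  have hL : HasFDerivAt leviCivita _ (z, w) := HasFDerivAt.prodMk h1 hg
  rw [hL.fderiv]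
  refine Prod.ext ?_ ?_
  · simp
    ring
  · simp [Complex.conjCLE_apply, smul_eq_mul]
    field_simp
    ring

/-- The lifted Levi-Civita map is a symplectic two-to-one covering: at every point `(z,w)`
with `z ≠ 0` its derivative preserves the standard symplectic bilinear form `ω₀`, and every
point of `(ℂ \ {0}) × ℂ` has exactly two preimages. -/
theorem leviCivita_symplectic_two_to_one :
    (∀ (z : ℂ), z ≠ 0 → ∀ (w : ℂ) (v v' : ℂ × ℂ),
      omega0 (fderiv ℝ leviCivita (z, w) v) (fderiv ℝ leviCivita (z, w) v') = omega0 v v') ∧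
    (∀ y : ℂ × ℂ, y.1 ≠ 0 →
      ({x : ℂ × ℂ | x.1 ≠ 0 ∧ leviCivita x = y}).encard = 2) := by
  constructor
  · intro z hz w v v'
    rw [lc_fderiv z w hz v, lc_fderiv z w hz v']
    simp only [omega0, eip_eq]
    rw [← Complex.sub_re, ← Complex.sub_re]
    congr 1
    simp only [map_sub, map_mul, map_div₀, map_pow, Complex.conj_conj]
    field_simp
    ring
  · intro y hy
    obtain ⟨r, hr⟩ : ∃ r : ℂ, r ^ 2 = 2 * y.1 :=
      IsAlgClosed.exists_pow_nat_eq (2 * y.1) (by norm_num)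
    have hr0 : r ≠ 0 := by
      intro h
      apply hy
      have : (2 : ℂ) * y.1 = 0 := by rw [← hr, h]; ring
      simpa using this
    have hcr : (starRingEnd ℂ) r ≠ 0 := by simpa using hr0
    have hpair : {x : ℂ × ℂ | x.1 ≠ 0 ∧ leviCivita x = y} =
        {((r, y.2 * (starRingEnd ℂ) r) : ℂ × ℂ), (-r, -(y.2 * (starRingEnd ℂ) r))} := by
      ext x
      simp only [Set.mem_setOf_eq, Set.mem_insert_iff, Set.mem_singleton_iff, leviCivita,
        Prod.mk.injEq, Prod.ext_iff]
      constructor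
      · rintro ⟨hx0, h1, h2⟩
        have hcx : (starRingEnd ℂ) x.1 ≠ 0 := by simpa using hx0
        have hsq : x.1 ^ 2 = r ^ 2 := by
          rw [hr]
          field_simp at h1
          linear_combination h1
        have hx2 : x.2 = y.2 * (starRingEnd ℂ) x.1 := by
          field_simp at h2
          linear_combination h2
        have : (x.1 - r) * (x.1 + r) = 0 := by linear_combination hsq
        rcases mul_eq_zero.1 this with h | h
        · left
          have h1' : x.1 = r := by linear_combination h
          exact ⟨h1', by rw [hx2, h1']⟩
        · right
          have h1' : x.1 = -r := by linear_combination h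
          refine ⟨h1', ?_⟩
          rw [hx2, h1', map_neg]
          ring
      · rintro (⟨h1, h2⟩ | ⟨h1, h2⟩)
        · refine ⟨by rw [h1]; exact hr0, ?_, ?_⟩
          · rw [h1, hr]; ring
          · rw [h1, h2]; field_simp
        · refine ⟨by rw [h1]; simpa using hr0, ?_, ?_⟩
          · rw [h1]; rw [show (-r) ^ 2 = r ^ 2 by ring, hr]; ring
          · rw [h1, h2, map_neg]; field_simp
    rw [hpair]
    refine Set.encard_pair ?_
    intro h
    have : r = -r := congrArg Prod.fst h
    have : (2 : ℂ) * r = 0 := by linear_combination this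
    simp [hr0] at this
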